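/- The closed imaginary cone I of a Coxeter system is contained in the nonnegative span of the simple roots: I ⊆ R_{≥0}Λ. -/
import Mathlib


noncomputable def coxEntry {B : Type*} (M : CoxeterMatrix B) (s t : B) : ℝ :=
  if M s t = 0 then -2 else -2 * Real.cos (Real.pi / (M s t))

noncomputable def coxForm {B : Type*} [Fintype B] (M : CoxeterMatrix B) (v w : B → ℝ) : ℝ :=
  ∑ s, ∑ t, v s * w t * coxEntry M s t

/-- The simple root `α_s` in `RΛ ≅ (B → ℝ)`. -/
noncomputable def simpleRoot {B : Type*} [DecidableEq B] (s : B) : B → ℝ := Pi.single s 1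

/-- The set of real roots: the `W`-orbit of the simple roots under the Tits representation. -/
def rootSet {B : Type*} [DecidableEq B] {W : Type*} [Group W]
    (ρ : W →* ((B → ℝ) ≃ₗ[ℝ] (B → ℝ))) : Set (B → ℝ) :=
  {v | ∃ (w : W) (s : B), v = ρ w (simpleRoot s)}

/-- The set of positive real roots. -/
def posRootSet {B : Type*} [DecidableEq B] {W : Type*} [Group W]
    (ρ : W →* ((B → ℝ) ≃ₗ[ℝ] (B → ℝ))) : Set (B → ℝ) :=
  {v ∈ rootSet ρ | ∀ i, 0 ≤ v i}

/-- The set `K = {v ∈ ℝ_{≥0}Λ : B(v, α_s) ≤ 0 for all s}`. -/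
noncomputable def coneK {B : Type*} [Fintype B] [DecidableEq B] (M : CoxeterMatrix B) :
    Set (B → ℝ) :=
  {v | (∀ i, 0 ≤ v i) ∧ ∀ s, coxForm M v (simpleRoot s) ≤ 0}

/-- The closed imaginary cone `I = closure (W · K)`. -/
noncomputable def imagCone {B : Type*} [Fintype B] [DecidableEq B] (M : CoxeterMatrix B)
    {W : Type*} [Group W] (ρ : W →* ((B → ℝ) ≃ₗ[ℝ] (B → ℝ))) : Set (B → ℝ) :=
  closure {v | ∃ (w : W), ∃ k ∈ coneK M, v = ρ w k}


set_option linter.unusedSectionVars false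
section Aux

variable {B : Type*} [Fintype B] [DecidableEq B] (M : CoxeterMatrix B)

lemma coxEntry_symm (s t : B) : coxEntry M s t = coxEntry M t s := by
  unfold coxEntry
  rw [show M s t = M t s from M.symmetric s t]

lemma coxEntry_self (s : B) : coxEntry M s s = 2 := by
  simp [coxEntry, M.diagonal, Real.cos_pi]

lemma coxForm_symm (v w : B → ℝ) : coxForm M v w = coxForm M w v := by
  unfold coxForm
  rw [Finset.sum_comm]
  refine Finset.sum_congr rfl fun t _ => Finset.sum_congr rfl fun s _ => ?_
  rw [coxEntry_symm]; ring

lemma coxForm_single_single (s t : B) :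
    coxForm M (simpleRoot s) (simpleRoot t) = coxEntry M s t := by
  unfold coxForm simpleRoot
  rw [Finset.sum_eq_single s]
  · rw [Finset.sum_eq_single t]
    · simp
    · intro b _ hb; simp [Pi.single_apply, hb]
    · intro h; exact absurd (Finset.mem_univ t) h
  · intro a _ ha; simp [Pi.single_apply, ha]
  · intro h; exact absurd (Finset.mem_univ s) h

lemma coxForm_add_right (u v w : B → ℝ) :
    coxForm M u (v + w) = coxForm M u v + coxForm M u w := by
  unfold coxForm
  rw [← Finset.sum_add_distrib]
  refine Finset.sum_congr rfl fun s _ => ?_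
  rw [← Finset.sum_add_distrib]
  refine Finset.sum_congr rfl fun t _ => ?_
  simp [Pi.add_apply]; ring

lemma coxForm_smul_right (u v : B → ℝ) (a : ℝ) :
    coxForm M u (a • v) = a * coxForm M u v := by
  unfold coxForm
  rw [Finset.mul_sum]
  refine Finset.sum_congr rfl fun s _ => ?_
  rw [Finset.mul_sum]
  refine Finset.sum_congr rfl fun t _ => ?_
  simp [Pi.smul_apply, smul_eq_mul]; ring

end Aux

/-- `chebF m j` : "`sin (j π / m) / sin (π / m)`", with the degenerate convention `j` if `m = 0`. -/
noncomputable def chebF (m : ℕ) (j : ℕ) : ℝ :=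
  if m = 0 then j else Real.sin (j * (Real.pi / m)) / Real.sin (Real.pi / m)

/-- The constant `2 cos (π / m)` (`2` if `m = 0`). -/
noncomputable def coxC (m : ℕ) : ℝ :=
  if m = 0 then 2 else 2 * Real.cos (Real.pi / m)

lemma chebF_zero (m : ℕ) : chebF m 0 = 0 := by simp [chebF]

lemma chebF_one {m : ℕ} (hm : m ≠ 1) : chebF m 1 = 1 := by
  unfold chebF
  rcases Nat.eq_zero_or_pos m with h | h
  · simp [h]
  · have hm2 : 2 ≤ m := by omega
    rw [if_neg (by omega)]
    have hpos : 0 < Real.sin (Real.pi / m) := by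
      apply Real.sin_pos_of_pos_of_lt_pi
      · positivity
      · apply div_lt_self Real.pi_pos
        exact_mod_cast by omega
    rw [Nat.cast_one, one_mul, div_self (ne_of_gt hpos)]

lemma chebF_nonneg {m j : ℕ} (h : m = 0 ∨ j ≤ m) : 0 ≤ chebF m j := by
  unfold chebF
  rcases h with h | h
  · simp [h]
  · rcases Nat.eq_zero_or_pos m with h0 | h0
    · simp [h0]
    · rw [if_neg (by omega)]
      apply div_nonneg
      · apply Real.sin_nonneg_of_nonneg_of_le_pi
        · positivity
        · calc (j : ℝ) * (Real.pi / m) ≤ m * (Real.pi / m) := by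
                apply mul_le_mul_of_nonneg_right (by exact_mod_cast h) (by positivity)
            _ = Real.pi := by field_simp
      · apply Real.sin_nonneg_of_nonneg_of_le_pi
        · positivity
        · apply div_le_self Real.pi_pos.le
          exact_mod_cast h0

lemma chebF_rec (m : ℕ) (j : ℕ) :
    chebF m (j + 2) = coxC m * chebF m (j + 1) - chebF m j := by
  unfold chebF coxC
  rcases eq_or_ne m 0 with h | h
  · simp [h]; ring
  · rw [if_neg h, if_neg h, if_neg h, if_neg h]
    have key : Real.sin ((j + 2 : ℕ) * (Real.pi / m)) =
        2 * Real.cos (Real.pi / m) * Real.sin ((j + 1 : ℕ) * (Real.pi / m))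
          - Real.sin ((j : ℕ) * (Real.pi / m)) := by
      push_cast [Nat.cast_add]
      set θ := Real.pi / m
      have h1 : ((j : ℝ) + 2) * θ = ((j + 1) * θ) + θ := by ring
      have h2 : (j : ℝ) * θ = ((j + 1) * θ) - θ := by ring
      rw [h1, h2, Real.sin_add, Real.sin_sub]
      ring
    rw [key]
    ring

section Rep

open CoxeterSystem

variable {B : Type*} [Fintype B] [DecidableEq B] {M : CoxeterMatrix B}
  {W : Type*} [Group W] (cs : CoxeterSystem M W)
  (ρ : W →* ((B → ℝ) ≃ₗ[ℝ] (B → ℝ)))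
  (hρ : ∀ (s : B) (v : B → ℝ),
      ρ (cs.simple s) v = v - coxForm M (simpleRoot s) v • simpleRoot s)

local prefix:100 "ℓ" => cs.length
local prefix:100 "π" => cs.wordProd
local prefix:100 "σ" => cs.simple

lemma rho_mul_apply (a b : W) (v : B → ℝ) : ρ (a * b) v = ρ a (ρ b v) := by
  rw [map_mul]; rfl

lemma coxEntry_eq_neg_coxC {s t : B} (hst : s ≠ t) : coxEntry M s t = -coxC (M s t) := by
  unfold coxEntry coxC
  split <;> ring

include hρ

lemma rho_simple_self (s : B) : ρ (σ s) (simpleRoot s) = -simpleRoot s := by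
  rw [hρ, coxForm_single_single, coxEntry_self]
  module

lemma rho_simple_other {s t : B} (hst : s ≠ t) :
    ρ (σ s) (simpleRoot t) = simpleRoot t - coxEntry M s t • simpleRoot s := by
  rw [hρ, coxForm_single_single]

/-- The key dihedral (rank 2) computation. -/
lemma rho_alternatingWord (s t : B) (hst : s ≠ t) (k : ℕ) :
    ρ (π (alternatingWord s t k)) (simpleRoot s) =
      (if Even k then chebF (M s t) (k+1) else chebF (M s t) k) • simpleRoot s +
      (if Even k then chebF (M s t) k else chebF (M s t) (k+1)) • simpleRoot t := by
  have hm1 : M s t ≠ 1 := M.off_diagonal s t hst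
  have hts : M t s = M s t := M.symmetric t s
  induction k with
  | zero =>
      simp only [alternatingWord, wordProd_nil, map_one, Nat.zero_add]
      rw [chebF_one hm1, chebF_zero]
      simp [LinearEquiv.coe_one]
  | succ k ih =>
      rw [alternatingWord_succ', wordProd_cons, rho_mul_apply, ih]
      rcases Nat.even_or_odd k with hk | hk
      · have hk1 : ¬ Even (k+1) := by simp [Nat.even_add_one, hk]
        simp only [if_pos hk, if_neg hk1]
        rw [map_add, map_smul, map_smul, rho_simple_self cs ρ hρ t,
          rho_simple_other cs ρ hρ hst.symm, coxEntry_eq_neg_coxC (M := M) hst.symm, hts,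
          chebF_rec (M s t) k]
        module
      · have hk1 : Even (k+1) := Nat.even_add_one.mpr (Nat.not_even_iff_odd.mpr hk)
        have hk' : ¬ Even k := Nat.not_even_iff_odd.mpr hk
        simp only [if_pos hk1, if_neg hk']
        rw [map_add, map_smul, map_smul, rho_simple_self cs ρ hρ s,
          rho_simple_other cs ρ hρ hst, coxEntry_eq_neg_coxC (M := M) hst,
          chebF_rec (M s t) k]
        module

theorem rho_simpleRoot_nonneg :
    ∀ (n : ℕ) (w : W) (s : B), ℓ w = n → ℓ (w * σ s) = n + 1 →
      ∀ i, 0 ≤ ρ w (simpleRoot s) i := by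
  intro n
  induction n using Nat.strong_induction_on with
  | _ n IH =>
  intro w s hn hws i
  rcases Nat.eq_zero_or_pos n with h0 | h0
  · subst h0
    have hw1 : w = 1 := cs.length_eq_zero_iff.mp hn
    subst hw1
    rw [map_one]
    show (0:ℝ) ≤ simpleRoot s i
    unfold simpleRoot
    rw [Pi.single_apply]
    split <;> norm_num
  · have hw1 : w ≠ 1 := by
      intro h; rw [h, cs.length_one] at hn; omega
    obtain ⟨t, ht⟩ := cs.exists_rightDescent_of_ne_one hw1
    have htlen : ℓ (w * σ t) + 1 = ℓ w := cs.isRightDescent_iff.mp ht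
    have hst : s ≠ t := by
      rintro rfl
      rw [hn] at htlen
      omega
    set A : Set ℕ := {k | cs.IsReduced (CoxeterSystem.alternatingWord s t k) ∧
        ℓ (w * (π (CoxeterSystem.alternatingWord s t k))⁻¹) + k = ℓ w} with hA
    have halt1 : CoxeterSystem.alternatingWord s t 1 = [t] := rfl
    have h1A : 1 ∈ A := by
      constructor
      · show ℓ (π (CoxeterSystem.alternatingWord s t 1)) = _
        rw [halt1]
        simp [cs.wordProd_singleton, cs.length_simple]
      · show ℓ (w * (π (CoxeterSystem.alternatingWord s t 1))⁻¹) + 1 = ℓ w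
        rw [halt1, cs.wordProd_singleton, cs.inv_simple]
        exact htlen
    have hbdd : BddAbove A := ⟨ℓ w, fun k hk => by have := hk.2; omega⟩
    obtain ⟨k, hkdef⟩ : ∃ k, k = sSup A := ⟨_, rfl⟩
    have hkA : k ∈ A := hkdef ▸ Nat.sSup_mem ⟨1, h1A⟩ hbdd
    have hk1 : 1 ≤ k := hkdef ▸ le_csSup hbdd h1A
    obtain ⟨u, hu⟩ : ∃ u, u = π (CoxeterSystem.alternatingWord s t k) := ⟨_, rfl⟩
    obtain ⟨w', hw'def⟩ : ∃ w', w' = w * u⁻¹ := ⟨_, rfl⟩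
    have hlu : ℓ u = k := by
      have := hkA.1
      rw [hu]
      unfold CoxeterSystem.IsReduced at this
      rwa [CoxeterSystem.length_alternatingWord] at this
    have hlw' : ℓ w' + k = ℓ w := by rw [hw'def, hu]; exact hkA.2
    have key : ∀ r : B, (r = s ∨ r = t) → ℓ (w' * σ r) = ℓ w' + 1 := by
      intro r hr
      by_contra hcon
      have hdesc : ℓ (w' * σ r) + 1 = ℓ w' :=
        (cs.length_mul_simple w' r).resolve_left hcon
      have hπ : π (r :: CoxeterSystem.alternatingWord s t k) = σ r * u := by
        rw [hu]; exact cs.wordProd_cons r _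
      have hlen1 : ℓ (w * (π (r :: CoxeterSystem.alternatingWord s t k))⁻¹) + (k+1) = ℓ w := by
        rw [hπ, mul_inv_rev, cs.inv_simple, ← mul_assoc, ← hw'def]
        omega
      have hredlen : ℓ (π (r :: CoxeterSystem.alternatingWord s t k)) = k + 1 := by
        have hub : ℓ (π (r :: CoxeterSystem.alternatingWord s t k)) ≤ k + 1 := by
          have := cs.length_wordProd_le (r :: CoxeterSystem.alternatingWord s t k)
          simpa [CoxeterSystem.length_alternatingWord] using this
        have htr : w = (w * (π (r :: CoxeterSystem.alternatingWord s t k))⁻¹) *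
            π (r :: CoxeterSystem.alternatingWord s t k) := by group
        have hlow := cs.length_mul_le
          (w * (π (r :: CoxeterSystem.alternatingWord s t k))⁻¹)
          (π (r :: CoxeterSystem.alternatingWord s t k))
        rw [← htr] at hlow
        omega
      obtain ⟨k', rfl⟩ : ∃ k', k = k' + 1 := ⟨k - 1, by omega⟩
      have hsucc : CoxeterSystem.alternatingWord s t (k' + 1) =
          (if Even k' then t else s) :: CoxeterSystem.alternatingWord s t k' :=
        CoxeterSystem.alternatingWord_succ' s t k'
      by_cases hhead : r = (if Even k' then t else s)
      · -- cancellation: contradicts hredlen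
        have : π (r :: CoxeterSystem.alternatingWord s t (k' + 1)) =
            π (CoxeterSystem.alternatingWord s t k') := by
          rw [hsucc, ← hhead, cs.wordProd_cons, cs.wordProd_cons, ← mul_assoc,
            cs.simple_mul_simple_self, one_mul]
        rw [this] at hredlen
        have := cs.length_wordProd_le (CoxeterSystem.alternatingWord s t k')
        rw [CoxeterSystem.length_alternatingWord] at this
        omega
      · -- extension: contradicts maximality
        have hr' : r = (if Even (k' + 1) then t else s) := by
          rcases Nat.even_or_odd k' with he | he
          · have h1 : ¬ Even (k' + 1) := by simp [Nat.even_add_one, he]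
            rw [if_pos he] at hhead
            rw [if_neg h1]
            rcases hr with rfl | rfl
            · rfl
            · exact absurd rfl hhead
          · have he' : ¬ Even k' := Nat.not_even_iff_odd.mpr he
            have h1 : Even (k' + 1) := Nat.even_add_one.mpr he'
            rw [if_neg he'] at hhead
            rw [if_pos h1]
            rcases hr with rfl | rfl
            · exact absurd rfl hhead
            · rfl
        have hword : CoxeterSystem.alternatingWord s t (k' + 1 + 1) =
            r :: CoxeterSystem.alternatingWord s t (k' + 1) := by
          rw [CoxeterSystem.alternatingWord_succ' s t (k' + 1), ← hr']
        have hmem : (k' + 1 + 1) ∈ A := by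
          constructor
          · show cs.IsReduced (CoxeterSystem.alternatingWord s t (k' + 1 + 1))
            unfold CoxeterSystem.IsReduced
            rw [hword, hredlen]
            simp
          · show ℓ (w * (π (CoxeterSystem.alternatingWord s t (k' + 1 + 1)))⁻¹) + (k' + 1 + 1) = ℓ w
            rw [hword]
            exact hlen1
        have := hkdef ▸ le_csSup hbdd hmem
        omega
    have hus : ℓ (u * σ s) = k + 1 := by
      have h1 : ℓ (u * σ s) ≤ k + 1 := by
        have := cs.length_mul_le u (σ s)
        rw [hlu, cs.length_simple] at this
        omega
      have heq : w * σ s = w' * (u * σ s) := by rw [hw'def]; group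
      have h2 := cs.length_mul_le w' (u * σ s)
      rw [← heq, hws] at h2
      omega
    have hcap : M s t = 0 ∨ k + 1 ≤ M s t := by
      by_contra hc
      push_neg at hc
      obtain ⟨hm0, hklt⟩ := hc
      have hMts : M t s = M s t := M.symmetric t s
      refine cs.not_isReduced_alternatingWord t s (m := k + 1) (by rwa [hMts]) (by omega) ?_
      unfold CoxeterSystem.IsReduced
      rw [CoxeterSystem.length_alternatingWord]
      rw [CoxeterSystem.alternatingWord_succ t s k, cs.wordProd_concat, ← hu]
      exact hus
    have ha : 0 ≤ chebF (M s t) (k+1) := chebF_nonneg hcap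
    have hb : 0 ≤ chebF (M s t) k := by
      refine chebF_nonneg ?_
      rcases hcap with h | h
      · exact Or.inl h
      · exact Or.inr (by omega)
    have hihs := IH (ℓ w') (by omega) w' s rfl (key s (Or.inl rfl)) i
    have hiht := IH (ℓ w') (by omega) w' t rfl (key t (Or.inr rfl)) i
    have hw : w = w' * u := by rw [hw'def]; group
    rw [hw, rho_mul_apply, hu, rho_alternatingWord cs ρ hρ s t hst k,
      map_add, map_smul, map_smul]
    simp only [Pi.add_apply, Pi.smul_apply, smul_eq_mul]
    split_ifs <;>
      exact add_nonneg (mul_nonneg (by assumption) hihs) (mul_nonneg (by assumption) hiht)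

theorem rho_coneK_nonneg :
    ∀ (n : ℕ) (w : W), ℓ w = n → ∀ v, (∀ i, 0 ≤ v i) →
      (∀ s, coxForm M v (simpleRoot s) ≤ 0) → ∀ i, 0 ≤ ρ w v i := by
  intro n
  induction n using Nat.strong_induction_on with
  | _ n IH =>
  intro w hn v hv1 hv2 i
  rcases Nat.eq_zero_or_pos n with h0 | h0
  · subst h0
    have hw1 : w = 1 := cs.length_eq_zero_iff.mp hn
    subst hw1
    rw [map_one]
    exact hv1 i
  · have hw1 : w ≠ 1 := by
      intro h; rw [h, cs.length_one] at hn; omega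
    obtain ⟨t, ht⟩ := cs.exists_rightDescent_of_ne_one hw1
    have htlen : ℓ (w * σ t) + 1 = ℓ w := cs.isRightDescent_iff.mp ht
    obtain ⟨w₁, hw₁⟩ : ∃ w₁, w₁ = w * σ t := ⟨_, rfl⟩
    have hw : w = w₁ * σ t := by
      rw [hw₁, mul_assoc, cs.simple_mul_simple_self, mul_one]
    have hlen₁ : ℓ w₁ + 1 = n := by rw [hw₁, hn] at *; omega
    have hc : coxForm M (simpleRoot t) v ≤ 0 := by
      rw [coxForm_symm]; exact hv2 t
    have hroot : ∀ j, 0 ≤ ρ w₁ (simpleRoot t) j := by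
      apply rho_simpleRoot_nonneg cs ρ hρ (ℓ w₁) w₁ t rfl
      rw [hw₁, cs.simple_mul_simple_cancel_right]
      omega
    have hvv := IH (ℓ w₁) (by omega) w₁ rfl v hv1 hv2 i
    rw [hw, rho_mul_apply, hρ t v, map_sub, map_smul]
    simp only [Pi.sub_apply, Pi.smul_apply, smul_eq_mul]
    have h1 : coxForm M (simpleRoot t) v * ρ w₁ (simpleRoot t) i ≤ 0 :=
      mul_nonpos_of_nonpos_of_nonneg hc (hroot i)
    linarith

end Rep

/-!
STATEMENT 3: The closed imaginary cone I of a Coxeter system is contained in the nonnegative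
span of the simple roots: I ⊆ ℝ_{≥0}Λ.
-/
theorem imagCone_subset_nonneg
    {B : Type*} [Fintype B] [DecidableEq B] (M : CoxeterMatrix B)
    {W : Type*} [Group W] (cs : CoxeterSystem M W)
    (ρ : W →* ((B → ℝ) ≃ₗ[ℝ] (B → ℝ)))
    (hρ : ∀ (s : B) (v : B → ℝ),
      ρ (cs.simple s) v = v - coxForm M (simpleRoot s) v • simpleRoot s) :
    imagCone M ρ ⊆ {v | ∀ i, 0 ≤ v i} := by
  have hcl : IsClosed {v : B → ℝ | ∀ i, 0 ≤ v i} := by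
    have h : {v : B → ℝ | ∀ i, 0 ≤ v i} = ⋂ i, {v : B → ℝ | 0 ≤ v i} := by
      ext v; simp [Set.mem_iInter]
    rw [h]
    exact isClosed_iInter fun i => isClosed_le continuous_const (continuous_apply i)
  refine closure_minimal ?_ hcl
  rintro v ⟨w, kk, ⟨hk1, hk2⟩, rfl⟩
  exact rho_coneK_nonneg cs ρ hρ (cs.length w) w rfl kk hk1 hk2
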